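/- Let C be a polygonal curve with vertices p_0, …, p_m and L(C) > 0. Then C is a fixed point of arclength respacing, i.e. f(p_k) = p_k for all k = 0, …, m, if and only if C is equilateral. -/

import Mathlib

open Finset Filter

noncomputable section

/-- The length of the polygonal curve with vertices `p 0, …, p m`
(also the arclength distance from `p 0` to `p m` along the curve). -/
def polyLength {dim : ℕ} (p : ℕ → EuclideanSpace ℝ (Fin dim)) (m : ℕ) : ℝ :=
  ∑ i ∈ Finset.range m, ‖p (i + 1) - p i‖

/-- `P` is the arclength-parameterized linear interpolation of the polygonal
curve with vertices `p 0, …, p m`: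
`P ((1-t)·d_{k-1} + t·d_k) = (1-t)·p_{k-1} + t·p_k` for `t ∈ [0,1]`, `k = 1, …, m`,
where `d_k = polyLength p k` is the arclength up to vertex `k`. -/
def IsArcParam {dim : ℕ} (p : ℕ → EuclideanSpace ℝ (Fin dim)) (m : ℕ)
    (P : ℝ → EuclideanSpace ℝ (Fin dim)) : Prop :=
  ∀ k : ℕ, 1 ≤ k → k ≤ m → ∀ t : ℝ, 0 ≤ t → t ≤ 1 →
    P ((1 - t) * polyLength p (k - 1) + t * polyLength p k)
      = (1 - t) • p (k - 1) + t • p k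

/-- The polygonal curve with vertices `p 0, …, p m` is equilateral:
all consecutive interpoint distances agree. -/
def IsEquilateral {dim : ℕ} (p : ℕ → EuclideanSpace ℝ (Fin dim)) (m : ℕ) : Prop :=
  ∀ k l : ℕ, 1 ≤ k → k ≤ m → 1 ≤ l → l ≤ m →
    ‖p k - p (k - 1)‖ = ‖p l - p (l - 1)‖

/-- `q 0, …, q m` are the vertices of the arclength respacing `f(C)` of the
polygonal curve `C` with vertices `p 0, …, p m`:
`q k = P (k·L(C)/m)` where `P` is the arclength parameterization of `C`;
by convention `f(C) := C` when `L(C) = 0`. -/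
def Respaces {dim : ℕ} (m : ℕ) (p q : ℕ → EuclideanSpace ℝ (Fin dim)) : Prop :=
  (polyLength p m = 0 ∧ ∀ k ≤ m, q k = p k) ∨
  (0 < polyLength p m ∧ ∃ P : ℝ → EuclideanSpace ℝ (Fin dim), IsArcParam p m P ∧
    ∀ k ≤ m, q k = P ((k : ℝ) * polyLength p m / m))

section Aux

variable {dim : ℕ} (p : ℕ → EuclideanSpace ℝ (Fin dim))

lemma pl_zero : polyLength p 0 = 0 := by simp [polyLength]

lemma pl_succ (k : ℕ) : polyLength p (k + 1) = polyLength p k + ‖p (k + 1) - p k‖ := by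
  simp [polyLength, Finset.sum_range_succ]

lemma pl_mono : Monotone (polyLength p) := by
  apply monotone_nat_of_le_succ
  intro n
  rw [pl_succ]
  nlinarith [norm_nonneg (p (n + 1) - p n)]

lemma pl_edge {k : ℕ} (hk : 1 ≤ k) :
    polyLength p k = polyLength p (k - 1) + ‖p k - p (k - 1)‖ := by
  obtain ⟨j, rfl⟩ : ∃ j, k = j + 1 := ⟨k - 1, by omega⟩
  simpa using pl_succ p j

lemma dist_le_pl {i j : ℕ} (h : i ≤ j) :
    ‖p j - p i‖ ≤ polyLength p j - polyLength p i := by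
  induction j, h using Nat.le_induction with
  | base => simp
  | succ n hn ih =>
    have h1 := pl_succ p n
    have h2 := dist_triangle (p (n + 1)) (p n) (p i)
    simp only [dist_eq_norm] at h2
    linarith

lemma rep_exists (m : ℕ) (hm : 1 ≤ m) :
    ∀ s : ℝ, 0 ≤ s → s ≤ polyLength p m →
      ∃ k : ℕ, ∃ t : ℝ, 1 ≤ k ∧ k ≤ m ∧ 0 ≤ t ∧ t ≤ 1 ∧
        (1 - t) * polyLength p (k - 1) + t * polyLength p k = s := by
  induction m, hm using Nat.le_induction with
  | base =>
    intro s hs0 hs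
    by_cases h1 : polyLength p 1 = 0
    · refine ⟨1, 0, le_refl _, le_refl _, le_refl _, zero_le_one, ?_⟩
      have hs' : s = 0 := le_antisymm (h1 ▸ hs) hs0
      simp [pl_zero, hs']
    · have hpos : 0 < polyLength p 1 :=
        lt_of_le_of_ne (le_trans hs0 hs) (Ne.symm h1)
      refine ⟨1, s / polyLength p 1, le_refl _, le_refl _,
        div_nonneg hs0 hpos.le, (div_le_one hpos).2 hs, ?_⟩
      simp only [Nat.sub_self, pl_zero, mul_zero, zero_add]
      field_simp
  | succ n hn ih =>
    intro s hs0 hs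
    by_cases h : s ≤ polyLength p n
    · obtain ⟨k, t, h1, h2, h3, h4, h5⟩ := ih s hs0 h
      exact ⟨k, t, h1, h2.trans (Nat.le_succ n), h3, h4, h5⟩
    · push_neg at h
      have hlt : polyLength p n < polyLength p (n + 1) := lt_of_lt_of_le h hs
      refine ⟨n + 1, (s - polyLength p n) / (polyLength p (n + 1) - polyLength p n),
        by omega, le_refl _, div_nonneg (by linarith) (by linarith),
        (div_le_one (by linarith)).2 (by linarith), ?_⟩
      simp only [Nat.add_sub_cancel]
      have hne : polyLength p (n + 1) - polyLength p n ≠ 0 := by linarith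
      have key : (s - polyLength p n) / (polyLength p (n + 1) - polyLength p n)
          * (polyLength p (n + 1) - polyLength p n) = s - polyLength p n :=
        div_mul_cancel₀ _ hne
      linear_combination key

lemma seg_left {m : ℕ} {P : ℝ → EuclideanSpace ℝ (Fin dim)} (hP : IsArcParam p m P)
    {k : ℕ} (hk1 : 1 ≤ k) (hkm : k ≤ m) {t : ℝ} (ht0 : 0 ≤ t) (ht1 : t ≤ 1) :
    ‖P ((1 - t) * polyLength p (k - 1) + t * polyLength p k) - p (k - 1)‖
      = t * (polyLength p k - polyLength p (k - 1)) := by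
  rw [hP k hk1 hkm t ht0 ht1]
  have hedge : polyLength p k - polyLength p (k - 1) = ‖p k - p (k - 1)‖ := by
    rw [pl_edge p hk1]; ring
  have h : (1 - t) • p (k - 1) + t • p k - p (k - 1) = t • (p k - p (k - 1)) := by
    module
  rw [h, norm_smul, Real.norm_of_nonneg ht0, hedge]

lemma seg_right {m : ℕ} {P : ℝ → EuclideanSpace ℝ (Fin dim)} (hP : IsArcParam p m P)
    {k : ℕ} (hk1 : 1 ≤ k) (hkm : k ≤ m) {t : ℝ} (ht0 : 0 ≤ t) (ht1 : t ≤ 1) :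
    ‖p k - P ((1 - t) * polyLength p (k - 1) + t * polyLength p k)‖
      = (1 - t) * (polyLength p k - polyLength p (k - 1)) := by
  rw [hP k hk1 hkm t ht0 ht1]
  have hedge : polyLength p k - polyLength p (k - 1) = ‖p k - p (k - 1)‖ := by
    rw [pl_edge p hk1]; ring
  have h : p k - ((1 - t) • p (k - 1) + t • p k) = (1 - t) • (p k - p (k - 1)) := by
    module
  rw [h, norm_smul, Real.norm_of_nonneg (by linarith), hedge]

lemma lip_aux {m : ℕ} {P : ℝ → EuclideanSpace ℝ (Fin dim)} (hP : IsArcParam p m P)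
    {k k' : ℕ} {t t' : ℝ}
    (hk1 : 1 ≤ k) (hkm : k ≤ m) (hk1' : 1 ≤ k') (hkm' : k' ≤ m)
    (ht0 : 0 ≤ t) (ht1 : t ≤ 1) (ht0' : 0 ≤ t') (ht1' : t' ≤ 1)
    (hkk : k ≤ k') :
    ‖P ((1 - t') * polyLength p (k' - 1) + t' * polyLength p k')
      - P ((1 - t) * polyLength p (k - 1) + t * polyLength p k)‖
      ≤ |((1 - t') * polyLength p (k' - 1) + t' * polyLength p k')
          - ((1 - t) * polyLength p (k - 1) + t * polyLength p k)| := by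
  rcases eq_or_lt_of_le hkk with rfl | hlt
  · -- same segment
    rw [hP k hk1 hkm t ht0 ht1, hP k hk1 hkm t' ht0' ht1']
    have hedge : polyLength p k - polyLength p (k - 1) = ‖p k - p (k - 1)‖ := by
      rw [pl_edge p hk1]; ring
    have h : (1 - t') • p (k - 1) + t' • p k - ((1 - t) • p (k - 1) + t • p k)
        = (t' - t) • (p k - p (k - 1)) := by module
    rw [h, norm_smul]
    have harg : (1 - t') * polyLength p (k - 1) + t' * polyLength p k
        - ((1 - t) * polyLength p (k - 1) + t * polyLength p k)
        = (t' - t) * (polyLength p k - polyLength p (k - 1)) := by ring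
    rw [harg, abs_mul, ← hedge]
    have : |polyLength p k - polyLength p (k - 1)|
        = polyLength p k - polyLength p (k - 1) := by
      rw [abs_of_nonneg]; rw [hedge]; positivity
    rw [this]
    exact le_of_eq rfl
  · -- different segments
    have hkk' : k ≤ k' - 1 := by omega
    have h1 := seg_right p hP hk1 hkm ht0 ht1
    have h2 := seg_left p hP hk1' hkm' ht0' ht1'
    have h3 := dist_le_pl p hkk'
    have h4 := dist_triangle4
      (P ((1 - t') * polyLength p (k' - 1) + t' * polyLength p k'))
      (p (k' - 1)) (p k)
      (P ((1 - t) * polyLength p (k - 1) + t * polyLength p k))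
    simp only [dist_eq_norm] at h4
    have hnd : ‖P ((1 - t') * polyLength p (k' - 1) + t' * polyLength p k') - p (k' - 1)‖
        = t' * (polyLength p k' - polyLength p (k' - 1)) := seg_left p hP hk1' hkm' ht0' ht1'
    have hmono1 : polyLength p (k - 1) ≤ polyLength p k := pl_mono p (by omega)
    have hmono2 : polyLength p k ≤ polyLength p (k' - 1) := pl_mono p hkk'
    have hmono3 : polyLength p (k' - 1) ≤ polyLength p k' := pl_mono p (by omega)
    have hdiff : (1 - t') * polyLength p (k' - 1) + t' * polyLength p k'
        - ((1 - t) * polyLength p (k - 1) + t * polyLength p k)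
        = t' * (polyLength p k' - polyLength p (k' - 1))
          + (polyLength p (k' - 1) - polyLength p k)
          + (1 - t) * (polyLength p k - polyLength p (k - 1)) := by ring
    have hnn : 0 ≤ (1 - t') * polyLength p (k' - 1) + t' * polyLength p k'
        - ((1 - t) * polyLength p (k - 1) + t * polyLength p k) := by
      rw [hdiff]; nlinarith
    rw [abs_of_nonneg hnn, hdiff]
    have hpn := norm_sub_rev (p k)
      (P ((1 - t) * polyLength p (k - 1) + t * polyLength p k))
    nlinarith [h4, hnd, h3, h1]

lemma lipschitz {m : ℕ} (hm : 1 ≤ m) {P : ℝ → EuclideanSpace ℝ (Fin dim)}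
    (hP : IsArcParam p m P) {x y : ℝ}
    (hx0 : 0 ≤ x) (hx : x ≤ polyLength p m) (hy0 : 0 ≤ y) (hy : y ≤ polyLength p m) :
    ‖P y - P x‖ ≤ |y - x| := by
  obtain ⟨k, t, hk1, hkm, ht0, ht1, hrx⟩ := rep_exists p m hm x hx0 hx
  obtain ⟨k', t', hk1', hkm', ht0', ht1', hry⟩ := rep_exists p m hm y hy0 hy
  rw [← hrx, ← hry]
  rcases le_total k k' with h | h
  · exact lip_aux p hP hk1 hkm hk1' hkm' ht0 ht1 ht0' ht1' h
  · rw [norm_sub_rev, abs_sub_comm]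
    exact lip_aux p hP hk1' hkm' hk1 hkm ht0' ht1' ht0 ht1 h

end Aux

/-- `C` is a fixed point of arclength respacing iff `C` is equilateral. -/
theorem stmt14 {dim m : ℕ} (hm : 1 ≤ m) (p : ℕ → EuclideanSpace ℝ (Fin dim))
    (hL : 0 < polyLength p m)
    (P : ℝ → EuclideanSpace ℝ (Fin dim)) (hP : IsArcParam p m P)
    (q : ℕ → EuclideanSpace ℝ (Fin dim))
    (hq : ∀ k ≤ m, q k = P ((k : ℝ) * polyLength p m / m)) :
    (∀ k ≤ m, q k = p k) ↔ IsEquilateral p m := by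
  have hm0 : (0 : ℝ) < m := by exact_mod_cast Nat.pos_of_ne_zero (by omega)
  constructor
  · intro hfix
    set L := polyLength p m with hLdef
    have hedge : ∀ i ∈ Finset.range m, ‖p (i + 1) - p i‖ ≤ L / m := by
      intro i hi
      rw [Finset.mem_range] at hi
      have hi1 : (i : ℝ) + 1 ≤ m := by exact_mod_cast Nat.succ_le_of_lt hi
      have hi0 : (0 : ℝ) ≤ i := Nat.cast_nonneg i
      have hx0 : (0 : ℝ) ≤ (i : ℝ) * L / m := by positivity
      have hx : (i : ℝ) * L / m ≤ L := by
        rw [div_le_iff₀ hm0]; nlinarith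
      have hy0 : (0 : ℝ) ≤ ((i : ℝ) + 1) * L / m := by positivity
      have hy : ((i : ℝ) + 1) * L / m ≤ L := by
        rw [div_le_iff₀ hm0]; nlinarith
      have hp1 : p (i + 1) = P (((i + 1 : ℕ) : ℝ) * L / m) := by
        rw [← hfix (i + 1) (by omega), hq (i + 1) (by omega)]
      have hp0 : p i = P ((i : ℝ) * L / m) := by
        rw [← hfix i (by omega), hq i (by omega)]
      have hcast : ((i + 1 : ℕ) : ℝ) = (i : ℝ) + 1 := by push_cast; ring
      rw [hp1, hp0, hcast]
      have hlip := lipschitz p hm hP hx0 hx hy0 hy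
      have habs : |((i : ℝ) + 1) * L / m - (i : ℝ) * L / m| = L / m := by
        rw [abs_of_nonneg]
        · ring
        · have : ((i : ℝ) + 1) * L / m - (i : ℝ) * L / m = L / m := by ring
          rw [this]; positivity
      rw [habs] at hlip
      exact hlip
    have hsum : ∑ i ∈ Finset.range m, ‖p (i + 1) - p i‖ = ∑ i ∈ Finset.range m, L / m := by
      rw [Finset.sum_const, Finset.card_range, nsmul_eq_mul]
      have : (m : ℝ) * (L / m) = L := by field_simp
      rw [this]
      exact hLdef.symm
    have hall := (Finset.sum_eq_sum_iff_of_le hedge).1 hsum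
    intro k l hk1 hkm hl1 hlm
    have hk' : k - 1 ∈ Finset.range m := Finset.mem_range.2 (by omega)
    have hl' : l - 1 ∈ Finset.range m := Finset.mem_range.2 (by omega)
    have h1 := hall (k - 1) hk'
    have h2 := hall (l - 1) hl'
    have hk1' : k - 1 + 1 = k := by omega
    have hl1' : l - 1 + 1 = l := by omega
    rw [hk1'] at h1
    rw [hl1'] at h2
    rw [h1, h2]
  · intro heq k hkm
    set c := ‖p 1 - p 0‖ with hc
    have hd : ∀ j ≤ m, polyLength p j = j * c := by
      intro j
      induction j with
      | zero => intro _; simp [pl_zero]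
      | succ n ih =>
        intro h
        rw [pl_succ, ih (by omega)]
        have hedge : ‖p (n + 1) - p n‖ = c := by
          have := heq (n + 1) 1 (by omega) h (le_refl 1) hm
          simpa using this
        rw [hedge]
        push_cast
        ring
    have hL' : polyLength p m = m * c := hd m le_rfl
    have hkc : (k : ℝ) * polyLength p m / m = (k : ℝ) * c := by
      rw [hL']
      field_simp
    rw [hq k hkm, hkc]
    rcases Nat.eq_zero_or_pos k with rfl | hk1
    · have h := hP 1 (le_refl 1) hm 0 (le_refl 0) zero_le_one
      simp only [Nat.sub_self, pl_zero, sub_zero, one_mul, zero_mul, add_zero,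
        one_smul, zero_smul] at h
      simpa using h
    · have h := hP k hk1 hkm 1 zero_le_one (le_refl 1)
      have harg : (1 - 1) * polyLength p (k - 1) + 1 * polyLength p k
          = (k : ℝ) * c := by rw [hd k hkm]; ring
      rw [harg] at h
      rw [h]
      simp
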